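/- arXiv:1711.04877 — 4 statements merged into one kernel-verified Lean document; each statement's English description precedes it below -/
import Mathlib

section
/- Let n, p, N be positive integers, X a real n×p matrix, Π and Σ_M diagonal n×n matrices with strictly positive diagonal entries, and Σ_O an arbitrary real n×n matrix. Assume A := Xᵀ·Π⁻¹·Σ_M·X is invertible. Define Ĵ = (1/N)·A, V̂_U = (1/N²)·Xᵀ·Π⁻¹·Σ_O·Π⁻¹·X, V̂ = Ĵ⁻¹·V̂_U·Ĵ⁻¹, and Ĉ = X·A⁻¹·Xᵀ·Π⁻¹·Σ_O. Then tr(V̂·Ĵ) = (1/N)·tr(Π⁻¹·Ĉ) = (1/N)·Σᵢ (1/Πᵢᵢ)·Ĉᵢᵢ. -/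
open Matrix

/-- Theorem 3.1 (equivalence of dAIC and HTE penalties): the dAIC penalty
`tr(V̂·Ĵ)` equals the Horvitz–Thompson–Efron covariance penalty
`(1/N)·tr(Π⁻¹·Ĉ) = (1/N)·Σᵢ Ĉᵢᵢ/πᵢ`. -/
theorem stmt_2 (n p N : ℕ) (hn : 0 < n) (hp : 0 < p) (hN : 0 < N)
    (X : Matrix (Fin n) (Fin p) ℝ)
    (π σM : Fin n → ℝ) (hπ : ∀ i, 0 < π i) (hσM : ∀ i, 0 < σM i)
    (Pi SigmaM : Matrix (Fin n) (Fin n) ℝ)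
    (hPi : Pi = Matrix.diagonal π) (hSigmaM : SigmaM = Matrix.diagonal σM)
    (SigmaO : Matrix (Fin n) (Fin n) ℝ)
    (A : Matrix (Fin p) (Fin p) ℝ) (hA : A = Xᵀ * Pi⁻¹ * SigmaM * X)
    (hAinv : IsUnit A.det)
    (J VU V : Matrix (Fin p) (Fin p) ℝ)
    (hJ : J = ((1 : ℝ) / N) • A)
    (hVU : VU = ((1 : ℝ) / (N : ℝ) ^ 2) • (Xᵀ * Pi⁻¹ * SigmaO * Pi⁻¹ * X))
    (hV : V = J⁻¹ * VU * J⁻¹)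
    (C : Matrix (Fin n) (Fin n) ℝ) (hC : C = X * A⁻¹ * Xᵀ * Pi⁻¹ * SigmaO) :
    (V * J).trace = ((1 : ℝ) / N) * (Pi⁻¹ * C).trace
      ∧ (V * J).trace = ((1 : ℝ) / N) * ∑ i, (1 / Pi i i) * C i i := by
  have hNne : ((N : ℝ)) ≠ 0 := Nat.cast_ne_zero.mpr hN.ne'
  have hcne : ((1 : ℝ) / N) ≠ 0 := by positivity
  -- J is invertible
  have hJdet : IsUnit J.det := by
    rw [hJ, Matrix.det_smul]
    exact (IsUnit.pow _ (isUnit_iff_ne_zero.mpr hcne)).mul hAinv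
  have hJinv : J⁻¹ = (N : ℝ) • A⁻¹ := by
    have : Invertible ((1 : ℝ) / N) := invertibleOfNonzero hcne
    rw [hJ, Matrix.inv_smul A ((1:ℝ)/(N:ℝ)) hAinv, invOf_eq_inv, one_div, inv_inv]
  -- trace(V*J) = trace(J⁻¹ * VU)
  have h1 : (V * J).trace = (J⁻¹ * VU).trace := by
    rw [hV, Matrix.trace_mul_comm, ← Matrix.mul_assoc, ← Matrix.mul_assoc,
      Matrix.mul_nonsing_inv _ hJdet, Matrix.one_mul, Matrix.trace_mul_comm]
  have h2 : (J⁻¹ * VU) = ((1 : ℝ) / N) • (A⁻¹ * (Xᵀ * Pi⁻¹ * SigmaO * Pi⁻¹ * X)) := by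
    rw [hJinv, hVU, Matrix.smul_mul, Matrix.mul_smul, smul_smul]
    congr 1
    field_simp
  have h3 : (A⁻¹ * (Xᵀ * Pi⁻¹ * SigmaO * Pi⁻¹ * X)).trace = (Pi⁻¹ * C).trace := by
    have : A⁻¹ * (Xᵀ * Pi⁻¹ * SigmaO * Pi⁻¹ * X)
        = (A⁻¹ * Xᵀ * Pi⁻¹ * SigmaO) * (Pi⁻¹ * X) := by
      simp [Matrix.mul_assoc]
    rw [this, Matrix.trace_mul_comm, hC]
    congr 1
    simp [Matrix.mul_assoc]
  have hmain : (V * J).trace = ((1 : ℝ) / N) * (Pi⁻¹ * C).trace := by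
    rw [h1, h2, Matrix.trace_smul, smul_eq_mul, h3]
  refine ⟨hmain, ?_⟩
  rw [hmain]
  congr 1
  have hPinv : Pi⁻¹ = Matrix.diagonal (fun i => (π i)⁻¹) := by
    rw [hPi]
    refine Matrix.inv_eq_left_inv ?_
    rw [Matrix.diagonal_mul_diagonal]
    convert Matrix.diagonal_one with i
    exact inv_mul_cancel₀ (hπ i).ne'
  rw [hPinv, Matrix.trace]
  apply Finset.sum_congr rfl
  intro i _
  rw [Matrix.diag_apply, Matrix.diagonal_mul, hPi, Matrix.diagonal_apply_eq, one_div]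
end

section
/- Let n, p, N be positive integers, X a real n×p matrix, Π a diagonal n×n matrix with strictly positive diagonal entries πᵢ, y ∈ ℝⁿ, and σ̂² > 0. Assume Xᵀ·Π⁻¹·X is invertible and set θ̂ = (XᵀΠ⁻¹X)⁻¹XᵀΠ⁻¹y, μ̂ = X·θ̂, and Σ_O = Diag((y − μ̂)(y − μ̂)ᵀ) (the diagonal matrix of squared residuals). Then (1/N)·Σᵢ (yᵢ − μ̂ᵢ)²/πᵢ + (2/N)·Σᵢ (1/πᵢ)·(X(XᵀΠ⁻¹X)⁻¹XᵀΠ⁻¹Σ_O)ᵢᵢ = σ̂² · [ (1/N)·Σᵢ (yᵢ − μ̂ᵢ)²/(πᵢ·σ̂²) + (2/(N·σ̂²))·tr{XᵀΠ⁻¹Σ_OΠ⁻¹X·(XᵀΠ⁻¹X)⁻¹} ]. -/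
open Matrix

/-- Section 3.1.1 worked example: for Horvitz–Thompson weighted least squares,
the HTE prediction error estimator equals `dAIC · σ̂²`. -/
theorem stmt_3 (n p N : ℕ) (hn : 0 < n) (hp : 0 < p) (hN : 0 < N)
    (X : Matrix (Fin n) (Fin p) ℝ)
    (π : Fin n → ℝ) (hπ : ∀ i, 0 < π i)
    (Pi : Matrix (Fin n) (Fin n) ℝ) (hPi : Pi = Matrix.diagonal π)
    (y : Fin n → ℝ) (σ2 : ℝ) (hσ2 : 0 < σ2)
    (hinv : IsUnit (Xᵀ * Pi⁻¹ * X).det)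
    (θ : Fin p → ℝ) (hθ : θ = (Xᵀ * Pi⁻¹ * X)⁻¹ *ᵥ (Xᵀ *ᵥ (Pi⁻¹ *ᵥ y)))
    (μ : Fin n → ℝ) (hμ : μ = X *ᵥ θ)
    (SigmaO : Matrix (Fin n) (Fin n) ℝ)
    (hSigmaO : SigmaO = Matrix.diagonal (fun i => (y i - μ i) ^ 2)) :
    (1 / (N : ℝ)) * ∑ i, (y i - μ i) ^ 2 / π i
        + (2 / (N : ℝ)) * ∑ i, (1 / π i)
            * (X * (Xᵀ * Pi⁻¹ * X)⁻¹ * Xᵀ * Pi⁻¹ * SigmaO) i i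
      = σ2 * ((1 / (N : ℝ)) * ∑ i, (y i - μ i) ^ 2 / (π i * σ2)
          + (2 / ((N : ℝ) * σ2))
            * (Xᵀ * Pi⁻¹ * SigmaO * Pi⁻¹ * X * (Xᵀ * Pi⁻¹ * X)⁻¹).trace) := by
  have hσ2' : σ2 ≠ 0 := hσ2.ne'
  have hN' : (N : ℝ) ≠ 0 := Nat.cast_ne_zero.mpr hN.ne'
  set B := (Xᵀ * Pi⁻¹ * X)⁻¹ with hB
  have hPiinv : Pi⁻¹ = Matrix.diagonal (fun i => (π i)⁻¹) := by
    apply Matrix.inv_eq_right_inv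
    rw [hPi, Matrix.diagonal_mul_diagonal,
      show (fun i => π i * (π i)⁻¹) = fun _ => (1 : ℝ) from
        funext fun i => mul_inv_cancel₀ (hπ i).ne', Matrix.diagonal_one]
  -- the penalty sum equals the trace
  have hsum : ∑ i, (1 / π i) * (X * B * Xᵀ * Pi⁻¹ * SigmaO) i i
      = (Xᵀ * Pi⁻¹ * SigmaO * Pi⁻¹ * X * B).trace := by
    have h1 : ∑ i, (1 / π i) * (X * B * Xᵀ * Pi⁻¹ * SigmaO) i i
        = (Pi⁻¹ * (X * B * Xᵀ * Pi⁻¹ * SigmaO)).trace := by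
      rw [Matrix.trace]
      apply Finset.sum_congr rfl
      intro i _
      rw [hPiinv]
      simp [Matrix.diag, Matrix.diagonal_mul, one_div]
    rw [h1]
    have h2 : Pi⁻¹ * (X * B * Xᵀ * Pi⁻¹ * SigmaO)
        = (Pi⁻¹ * X * B) * (Xᵀ * (Pi⁻¹ * SigmaO)) := by
      simp only [Matrix.mul_assoc]
    rw [h2, Matrix.trace_mul_comm]
    congr 1
    simp only [Matrix.mul_assoc]
  rw [hsum]
  -- arithmetic
  have hS : ∑ i, (y i - μ i) ^ 2 / (π i * σ2)
      = (∑ i, (y i - μ i) ^ 2 / π i) / σ2 := by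
    rw [Finset.sum_div]
    apply Finset.sum_congr rfl
    intro i _
    rw [div_div]
  rw [hS]
  field_simp
end

section
/- Let (Ω, P) be a probability space, let y and ŷ be real-valued square-integrable random variables, and let y⁰ be a square-integrable random variable that is independent of ŷ and has the same first and second moments as y (E[y⁰] = E[y], E[(y⁰)²] = E[y²]). Then E[(y⁰ − ŷ)²] = E[(y − ŷ)²] + 2·Cov(y, ŷ). -/
open MeasureTheory ProbabilityTheory

lemma aux_mul_integrable {Ω : Type*} [MeasurableSpace Ω] {P : Measure Ω}
    {f g : Ω → ℝ} (hf : MemLp f 2 P) (hg : MemLp g 2 P) :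
    Integrable (fun ω => f ω * g ω) P := by
  refine (hf.integrable_sq.add hg.integrable_sq).mono' (hf.1.mul hg.1) ?_
  filter_upwards with ω
  have := abs_mul (f ω) (g ω)
  have h1 := sq_abs (f ω); have h2 := sq_abs (g ω)
  have := sq_nonneg (|f ω| - |g ω|)
  simp only [Real.norm_eq_abs, Pi.add_apply]
  nlinarith [abs_nonneg (f ω), abs_nonneg (g ω)]

lemma aux_expand {Ω : Type*} [MeasurableSpace Ω] {P : Measure Ω}
    {f g : Ω → ℝ} (hf : MemLp f 2 P) (hg : MemLp g 2 P) :
    ∫ ω, (f ω - g ω) ^ 2 ∂P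
      = ∫ ω, (f ω) ^ 2 ∂P - 2 * ∫ ω, f ω * g ω ∂P + ∫ ω, (g ω) ^ 2 ∂P := by
  have h1 := hf.integrable_sq
  have h2 := hg.integrable_sq
  have h3 := aux_mul_integrable hf hg
  have : (fun ω => (f ω - g ω) ^ 2)
      = fun ω => (f ω) ^ 2 - 2 * (f ω * g ω) + (g ω) ^ 2 := by
    funext ω; ring
  rw [this, integral_add (by exact h1.sub (h3.const_mul 2) :
      Integrable (fun ω => f ω ^ 2 - 2 * (f ω * g ω)) P) h2,
    integral_sub h1 (h3.const_mul 2), MeasureTheory.integral_const_mul]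

/-- Squared-error special case of Efron's optimism theorem (Mallows's Cp penalty):
`E[(y⁰ − ŷ)²] = E[(y − ŷ)²] + 2·Cov(y, ŷ)`. -/
theorem stmt_4 {Ω : Type*} [MeasurableSpace Ω] (P : Measure Ω) [IsProbabilityMeasure P]
    (y yhat y0 : Ω → ℝ)
    (hy : MemLp y 2 P) (hyhat : MemLp yhat 2 P) (hy0 : MemLp y0 2 P)
    (hindep : IndepFun y0 yhat P)
    (hmom1 : ∫ ω, y0 ω ∂P = ∫ ω, y ω ∂P)
    (hmom2 : ∫ ω, (y0 ω) ^ 2 ∂P = ∫ ω, (y ω) ^ 2 ∂P) :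
    ∫ ω, (y0 ω - yhat ω) ^ 2 ∂P
      = ∫ ω, (y ω - yhat ω) ^ 2 ∂P
        + 2 * ((∫ ω, y ω * yhat ω ∂P) - (∫ ω, y ω ∂P) * (∫ ω, yhat ω ∂P)) := by
  have e1 := aux_expand hy0 hyhat
  have e2 := aux_expand hy hyhat
  have hmul : ∫ ω, y0 ω * yhat ω ∂P = (∫ ω, y0 ω ∂P) * ∫ ω, yhat ω ∂P :=
    hindep.integral_fun_mul_eq_mul_integral hy0.1 hyhat.1
  rw [e1, e2, hmul, hmom1, hmom2]
  ring
end

section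
/- Let ψ : ℝ → ℝ be twice differentiable with ψ'' > 0 on an open interval D, and let λ : M → D denote the inverse function of ψ' (so ψ'(λ(μ)) = μ for all μ in the image M of ψ' restricted to D). Define q(u) = 2·(ψ(λ(u)) − u·λ(u)) for u ∈ M, and the q-class loss Q(u, m) = q(m) + q'(m)·(u − m) − q(u). Then for all y, μ̂ ∈ M: Q(y, μ̂) = 2·[(λ(y)·y − ψ(λ(y))) − (λ(μ̂)·y − ψ(λ(μ̂)))], i.e., the q-class loss built from this q equals the exponential-family deviance, twice the log-likelihood ratio between the saturated natural parameter λ(y) and the fitted natural parameter λ(μ̂) under the density exp(λ·y − ψ(λ)). -/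
/-- The q-class loss built from `q(u) = 2·(ψ(λ(u)) − u·λ(u))` equals the
exponential-family deviance, twice the log-likelihood ratio between the saturated
and fitted natural parameters (Equations (3)–(4) of the paper). -/
theorem stmt_6 (ψ : ℝ → ℝ) (D : Set ℝ) (hDopen : IsOpen D) (hDconn : D.OrdConnected)
    (hψ1 : ∀ x ∈ D, DifferentiableAt ℝ ψ x)
    (hψ2 : ∀ x ∈ D, DifferentiableAt ℝ (deriv ψ) x)
    (hψpos : ∀ x ∈ D, 0 < deriv (deriv ψ) x)
    (M : Set ℝ) (hM : M = deriv ψ '' D)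
    (lam : ℝ → ℝ) (hlam : ∀ u ∈ M, lam u ∈ D ∧ deriv ψ (lam u) = u)
    (q : ℝ → ℝ) (hq : ∀ u, q u = 2 * (ψ (lam u) - u * lam u))
    (Q : ℝ → ℝ → ℝ) (hQ : ∀ u m, Q u m = q m + deriv q m * (u - m) - q u) :
    ∀ y ∈ M, ∀ μ ∈ M,
      Q y μ = 2 * ((lam y * y - ψ (lam y)) - (lam μ * y - ψ (lam μ))) := by
  set f := deriv ψ with hf
  have hconv : Convex ℝ D := hDconn.convex
  have hψcont : ContinuousOn f D := fun x hx => (hψ2 x hx).continuousAt.continuousWithinAt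
  have hmono : StrictMonoOn f D := by
    refine strictMonoOn_of_deriv_pos hconv hψcont ?_
    intro x hx
    rw [hDopen.interior_eq] at hx
    exact hψpos x hx
  -- M is open
  have hMopen : IsOpen M := by
    rw [hM, isOpen_iff_mem_nhds]
    rintro u ⟨x, hx, rfl⟩
    obtain ⟨ε, hε, hball⟩ := Metric.isOpen_iff.1 hDopen x hx
    set a := x - ε / 2
    set b := x + ε / 2
    have hIcc : Set.Icc a b ⊆ D := by
      intro z hz
      apply hball
      simp only [Set.mem_Icc, a, b] at hz
      rw [Metric.mem_ball, Real.dist_eq, abs_lt]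
      constructor <;> linarith [hz.1, hz.2]
    have hab : a ≤ b := by simp only [a, b]; linarith
    have hax : a < x := by simp only [a]; linarith
    have hxb : x < b := by simp only [b]; linarith
    have h1 : f a < f x := hmono (hIcc ⟨le_refl a, hab⟩) hx hax
    have h2 : f x < f b := hmono hx (hIcc ⟨hab, le_refl b⟩) hxb
    have hsub : Set.Icc (f a) (f b) ⊆ f '' Set.Icc a b :=
      intermediate_value_Icc hab (hψcont.mono hIcc)
    refine Filter.mem_of_superset (Ioo_mem_nhds h1 h2) ?_
    intro z hz
    obtain ⟨w, hw, hwz⟩ := hsub ⟨le_of_lt hz.1, le_of_lt hz.2⟩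
    exact ⟨w, hIcc hw, hwz⟩
  -- lam is monotone on M
  have hlmono : MonotoneOn lam M := by
    intro u hu v hv huv
    by_contra h
    push_neg at h
    have := hmono (hlam v hv).1 (hlam u hu).1 h
    rw [(hlam v hv).2, (hlam u hu).2] at this
    linarith
  -- lam '' M ⊇ D
  have himg : D ⊆ lam '' M := by
    intro x hx
    have hfx : f x ∈ M := hM ▸ ⟨x, hx, rfl⟩
    refine ⟨f x, hfx, ?_⟩
    exact hmono.injOn (hlam _ hfx).1 hx (hlam _ hfx).2
  -- key: derivative of q at points of M
  have hderiv : ∀ m ∈ M, deriv q m = -(2 * lam m) := by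
    intro m hm
    have hmD : lam m ∈ D := (hlam m hm).1
    have hcont : ContinuousAt lam m :=
      continuousAt_of_monotoneOn_of_image_mem_nhds hlmono (hMopen.mem_nhds hm)
        (Filter.mem_of_superset (hDopen.mem_nhds hmD) himg)
    have hfd : HasDerivAt f (deriv f (lam m)) (lam m) := (hψ2 _ hmD).hasDerivAt
    have hne : deriv f (lam m) ≠ 0 := (hψpos _ hmD).ne'
    have hlam' : HasDerivAt lam (deriv f (lam m))⁻¹ m :=
      HasDerivAt.of_local_left_inverse hcont hfd hne
        (Filter.eventually_of_mem (hMopen.mem_nhds hm) fun x hx => (hlam x hx).2)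
    set l' := (deriv f (lam m))⁻¹
    have hψat : HasDerivAt ψ m (lam m) := by
      have := (hψ1 _ hmD).hasDerivAt
      rwa [show deriv ψ (lam m) = m from (hlam m hm).2] at this
    have hcomp : HasDerivAt (fun u => ψ (lam u)) (m * l') m := by
      have := HasDerivAt.comp m hψat hlam'
      exact this
    have hmul : HasDerivAt (fun u => u * lam u) (1 * lam m + m * l') m :=
      (hasDerivAt_id m).mul hlam'
    have hqd : HasDerivAt q (2 * (m * l' - (1 * lam m + m * l'))) m := by
      have h := ((hcomp.sub hmul).const_mul (2 : ℝ))
      have hfun : q = fun u => 2 * (ψ (lam u) - u * lam u) := funext hq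
      rw [hfun]
      exact h
    have : deriv q m = 2 * (m * l' - (1 * lam m + m * l')) := hqd.deriv
    rw [this]; ring
  intro y hy μ hμ
  rw [hQ, hq, hq, hderiv μ hμ]
  ring
end
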